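/- Suppose a signal f : ℤ_N × ℤ_T → ℂ has more than T·(2S-1)/(2S) of its rows fully recovered, where S ≥ max_{t} |supp_n(G̃f(t,·))| and G̃f(t,n) is the column-wise Gabor (Fourier) transform of column t. Then for every column t, the number of missing values in that column times |supp_n(G̃f(t,·))| is strictly less than T/2, so each column can be uniquely recovered by the Donoho–Stark criterion applied to ℤ_T. -/

import Mathlib

open scoped BigOperators Classical
noncomputable section

/-- One-dimensional DFT on ℤ_T with unitary normalization. -/
def dft1 (T : ℕ) [NeZero T] (f : ZMod T → ℂ) : ZMod T → ℂ :=
  fun n => ((1 / Real.sqrt T : ℝ) : ℂ) *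
    ∑ a : ZMod T, f a *
      Complex.exp (-2 * Real.pi * Complex.I * (((n.val * a.val : ℕ) : ℂ) / (T : ℂ)))

/-- Column-wise Gabor transform: `G̃f(t,n)` is the DFT of the `t`-th column of `f`. -/
def colGabor (N T : ℕ) [NeZero N] [NeZero T] (f : ZMod N × ZMod T → ℂ)
    (t : ZMod N) : ZMod T → ℂ :=
  dft1 T (fun a => f (t, a))

open ZMod Finset

lemma exp_eq_stdAddChar (T : ℕ) [NeZero T] (n a : ZMod T) :
    Complex.exp (-2 * Real.pi * Complex.I * (((n.val * a.val : ℕ) : ℂ) / (T : ℂ))) =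
      stdAddChar (-(a * n)) := by
  have h : ((-((n.val : ℤ) * (a.val : ℤ)) : ℤ) : ZMod T) = -(a * n) := by
    push_cast
    rw [ZMod.natCast_val, ZMod.natCast_val, ZMod.cast_id, ZMod.cast_id]
    ring
  rw [← h, ZMod.stdAddChar_coe]
  congr 1
  push_cast
  ring

lemma dft1_eq_dft (T : ℕ) [NeZero T] (h : ZMod T → ℂ) (n : ZMod T) :
    dft1 T h n = ((1 / Real.sqrt T : ℝ) : ℂ) * ZMod.dft h n := by
  rw [dft1, ZMod.dft_apply]
  congr 1
  refine Finset.sum_congr rfl fun a _ => ?_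
  rw [exp_eq_stdAddChar, smul_eq_mul, mul_comm]

lemma dft1_support_eq (T : ℕ) [NeZero T] (h : ZMod T → ℂ) :
    (Finset.univ.filter fun n : ZMod T => dft1 T h n ≠ 0) =
      (Finset.univ.filter fun n : ZMod T => ZMod.dft h n ≠ 0) := by
  have hc : ((1 / Real.sqrt T : ℝ) : ℂ) ≠ 0 := by
    have : (0 : ℝ) < Real.sqrt T := Real.sqrt_pos.2 (by exact_mod_cast Nat.pos_of_ne_zero (NeZero.ne T))
    simp [Complex.ofReal_ne_zero, ne_of_gt this]
  refine Finset.filter_congr fun n _ => ?_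
  simp only [dft1_eq_dft, ne_eq, mul_eq_zero, hc, false_or]

/-- Donoho–Stark: if `|supp h| * |supp 𝓕 h| < T` then `h = 0`. -/
lemma donoho_stark (T : ℕ) [NeZero T] (h : ZMod T → ℂ)
    (hlt : ((Finset.univ.filter fun a : ZMod T => h a ≠ 0).card : ℝ) *
        ((Finset.univ.filter fun n : ZMod T => ZMod.dft h n ≠ 0).card : ℝ) < (T : ℝ)) :
    h = 0 := by
  by_contra hne
  set A := Finset.univ.filter (fun a : ZMod T => h a ≠ 0) with hA
  set B := Finset.univ.filter (fun n : ZMod T => ZMod.dft h n ≠ 0) with hB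
  obtain ⟨a0, -, ha0⟩ := Finset.exists_max_image (Finset.univ : Finset (ZMod T))
    (fun a => ‖h a‖) ⟨0, Finset.mem_univ 0⟩
  obtain ⟨k0, -, hk0⟩ := Finset.exists_max_image (Finset.univ : Finset (ZMod T))
    (fun k => ‖ZMod.dft h k‖) ⟨0, Finset.mem_univ 0⟩
  set X := ‖h a0‖
  set Y := ‖ZMod.dft h k0‖
  have hXpos : 0 < X := by
    rcases Function.ne_iff.1 hne with ⟨a, ha⟩
    have : 0 < ‖h a‖ := by simpa [norm_pos_iff] using ha
    exact lt_of_lt_of_le this (ha0 a (Finset.mem_univ a))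
  -- Y ≤ |A| * X
  have hnorm_char : ∀ x : ZMod T, ‖stdAddChar x‖ = 1 := fun x => by
    rw [ZMod.stdAddChar_apply, Circle.norm_coe]
  have hY : ∀ k : ZMod T, ‖ZMod.dft h k‖ ≤ (A.card : ℝ) * X := by
    intro k
    rw [ZMod.dft_apply]
    have hsub : ∑ j : ZMod T, stdAddChar (-(j * k)) • h j
        = ∑ j ∈ A, stdAddChar (-(j * k)) • h j := by
      refine (Finset.sum_subset (Finset.subset_univ A) fun j _ hj => ?_).symm
      have : h j = 0 := by simpa [hA] using hj
      simp [this]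
    rw [hsub]
    calc ‖∑ j ∈ A, stdAddChar (-(j * k)) • h j‖
        ≤ ∑ j ∈ A, ‖stdAddChar (-(j * k)) • h j‖ := norm_sum_le _ _
      _ ≤ ∑ _j ∈ A, X := by
          refine Finset.sum_le_sum fun j _ => ?_
          rw [smul_eq_mul, norm_mul, hnorm_char, one_mul]
          exact ha0 j (Finset.mem_univ j)
      _ = (A.card : ℝ) * X := by rw [Finset.sum_const, nsmul_eq_mul]
  -- X ≤ (1/T) * |B| * Y
  have hX : X ≤ ((T : ℝ))⁻¹ * ((B.card : ℝ) * Y) := by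
    have hinv : h a0 = ((T : ℂ))⁻¹ * ZMod.dft (ZMod.dft h) (-a0) := by
      have := congrFun (ZMod.dft_dft h) (-a0)
      rw [neg_neg] at this
      rw [this, smul_eq_mul, ← mul_assoc, inv_mul_cancel₀ (NeZero.ne (T : ℂ)), one_mul]
    have hb : ‖ZMod.dft (ZMod.dft h) (-a0)‖ ≤ (B.card : ℝ) * Y := by
      rw [ZMod.dft_apply]
      have hsub : ∑ j : ZMod T, stdAddChar (-(j * (-a0))) • ZMod.dft h j
          = ∑ j ∈ B, stdAddChar (-(j * (-a0))) • ZMod.dft h j := by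
        refine (Finset.sum_subset (Finset.subset_univ B) fun j _ hj => ?_).symm
        have : ZMod.dft h j = 0 := by simpa [hB] using hj
        simp [this]
      rw [hsub]
      calc ‖∑ j ∈ B, stdAddChar (-(j * (-a0))) • ZMod.dft h j‖
          ≤ ∑ j ∈ B, ‖stdAddChar (-(j * (-a0))) • ZMod.dft h j‖ := norm_sum_le _ _
        _ ≤ ∑ _j ∈ B, Y := by
            refine Finset.sum_le_sum fun j _ => ?_
            rw [smul_eq_mul, norm_mul, hnorm_char, one_mul]
            exact hk0 j (Finset.mem_univ j)
        _ = (B.card : ℝ) * Y := by rw [Finset.sum_const, nsmul_eq_mul]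
    calc X = ‖h a0‖ := rfl
      _ = ‖((T : ℂ))⁻¹ * ZMod.dft (ZMod.dft h) (-a0)‖ := by rw [hinv]
      _ = ((T : ℝ))⁻¹ * ‖ZMod.dft (ZMod.dft h) (-a0)‖ := by
          rw [norm_mul, norm_inv, Complex.norm_natCast]
      _ ≤ ((T : ℝ))⁻¹ * ((B.card : ℝ) * Y) := by
          have : (0:ℝ) ≤ ((T:ℝ))⁻¹ := by positivity
          exact mul_le_mul_of_nonneg_left hb this
  have hTpos : (0 : ℝ) < T := by exact_mod_cast Nat.pos_of_ne_zero (NeZero.ne T)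
  have hYA : Y ≤ (A.card : ℝ) * X := hY k0
  -- combine
  have : X ≤ ((T : ℝ))⁻¹ * ((B.card : ℝ) * ((A.card : ℝ) * X)) := by
    refine hX.trans ?_
    have hBnn : (0:ℝ) ≤ (B.card : ℝ) := by positivity
    have : (B.card : ℝ) * Y ≤ (B.card : ℝ) * ((A.card : ℝ) * X) :=
      mul_le_mul_of_nonneg_left hYA hBnn
    exact mul_le_mul_of_nonneg_left this (by positivity)
  have h2 : (T : ℝ) * X ≤ (B.card : ℝ) * ((A.card : ℝ) * X) := by
    have h3 := mul_le_mul_of_nonneg_left this hTpos.le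
    rwa [← mul_assoc, mul_inv_cancel₀ hTpos.ne', one_mul] at h3
  nlinarith [mul_lt_mul_of_pos_right hlt hXpos, h2]

/-- If more than `T(2S-1)/(2S)` of the rows of `f : ℤ_N × ℤ_T → ℂ` are fully recovered,
where `S` bounds the column-wise Fourier support sizes, then in every column the number
of missing values times the column Fourier support size is `< T/2`, so each column is
uniquely recovered by the Donoho–Stark criterion on ℤ_T. -/
theorem column_repair (N T : ℕ) [NeZero N] [NeZero T]
    (f : ZMod N × ZMod T → ℂ) (M : Finset (ZMod N × ZMod T)) (S : ℕ) (hS : 0 < S)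
    (hSbound : ∀ t : ZMod N,
      (Finset.univ.filter fun n : ZMod T => colGabor N T f t n ≠ 0).card ≤ S)
    (hrows : ((Finset.univ.filter fun a : ZMod T =>
        ∀ t : ZMod N, (t, a) ∉ M).card : ℝ) >
      (T : ℝ) * (2 * S - 1) / (2 * S)) :
    ∀ t : ZMod N,
      ((M.filter fun p => p.1 = t).card : ℝ) *
          ((Finset.univ.filter fun n : ZMod T => colGabor N T f t n ≠ 0).card : ℝ) <
        (T : ℝ) / 2 ∧
      ∀ g : ZMod T → ℂ,
        (Finset.univ.filter fun n : ZMod T => dft1 T g n ≠ 0).card ≤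
          (Finset.univ.filter fun n : ZMod T => colGabor N T f t n ≠ 0).card →
        (∀ a : ZMod T, (t, a) ∉ M → g a = f (t, a)) →
        ∀ a : ZMod T, g a = f (t, a) := by
  intro t
  set st := (Finset.univ.filter fun n : ZMod T => colGabor N T f t n ≠ 0).card with hst
  set mt := (M.filter fun p => p.1 = t).card with hmt
  set R := (Finset.univ.filter fun a : ZMod T => ∀ t : ZMod N, (t, a) ∉ M).card with hR
  -- counting: mt + R ≤ T
  have hcard : mt + R ≤ T := by
    have h1 : mt ≤ (Finset.univ.filter fun a : ZMod T => ¬ ∀ t : ZMod N, (t, a) ∉ M).card := by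
      refine Finset.card_le_card_of_injOn Prod.snd ?_ ?_
      · intro p hp
        simp only [Finset.mem_coe, Finset.mem_filter, Finset.mem_univ, true_and, not_forall, not_not]
        obtain ⟨hpM, hpt⟩ := Finset.mem_filter.1 hp
        exact ⟨t, by rwa [← hpt, Prod.mk.eta]⟩
      · intro p hp q hq hpq
        obtain ⟨-, hpt⟩ := Finset.mem_filter.1 hp
        obtain ⟨-, hqt⟩ := Finset.mem_filter.1 hq
        exact Prod.ext (hpt.trans hqt.symm) hpq
    have h2 : (Finset.univ.filter fun a : ZMod T => ∀ t : ZMod N, (t, a) ∉ M).card +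
        (Finset.univ.filter fun a : ZMod T => ¬ ∀ t : ZMod N, (t, a) ∉ M).card =
        Fintype.card (ZMod T) :=
      Finset.card_filter_add_card_filter_not _
    rw [ZMod.card] at h2
    omega
  have hTpos : (0 : ℝ) < T := by exact_mod_cast Nat.pos_of_ne_zero (NeZero.ne T)
  have hSpos : (0 : ℝ) < S := by exact_mod_cast hS
  have hstS : (st : ℝ) ≤ S := by exact_mod_cast hSbound t
  have hcardR : (mt : ℝ) + R ≤ T := by exact_mod_cast hcard
  have hstnn : (0 : ℝ) ≤ st := Nat.cast_nonneg _
  have hmtnn : (0 : ℝ) ≤ mt := Nat.cast_nonneg _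
  have hmain : (mt : ℝ) * st < (T : ℝ) / 2 := by
    have hmtlt : (mt : ℝ) < (T : ℝ) / (2 * S) := by
      have : (mt : ℝ) ≤ (T : ℝ) - R := by linarith
      have h3 : (T : ℝ) - R < (T : ℝ) - (T : ℝ) * (2 * S - 1) / (2 * S) := by linarith
      have h4 : (T : ℝ) - (T : ℝ) * (2 * S - 1) / (2 * S) = (T : ℝ) / (2 * S) := by
        field_simp; ring
      linarith
    calc (mt : ℝ) * st ≤ (mt : ℝ) * S := mul_le_mul_of_nonneg_left hstS hmtnn
      _ < ((T : ℝ) / (2 * S)) * S := by exact mul_lt_mul_of_pos_right hmtlt hSpos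
      _ = (T : ℝ) / 2 := by field_simp
  refine ⟨hmain, ?_⟩
  intro g hgsupp hgagree a
  set h : ZMod T → ℂ := fun a => g a - f (t, a) with hh
  -- supp h card ≤ mt
  have hsupph : (Finset.univ.filter fun a : ZMod T => h a ≠ 0).card ≤ mt := by
    refine Finset.card_le_card_of_injOn (fun a => (t, a)) ?_ ?_
    · intro a ha
      simp only [Finset.mem_coe, Finset.mem_filter, Finset.mem_univ, true_and] at ha
      refine Finset.mem_coe.2 <| Finset.mem_filter.2 ⟨?_, rfl⟩
      by_contra hcon
      exact ha (by rw [hh]; simp [hgagree a hcon])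
    · intro a _ b _ hab
      simpa using congrArg Prod.snd hab
  -- supp 𝓕 h card ≤ 2 * st
  have hdfth : ZMod.dft h = fun n => ZMod.dft g n - ZMod.dft (fun a => f (t, a)) n := by
    have : h = g - fun a => f (t, a) := rfl
    rw [this, map_sub]
    rfl
  have hsuppF : (Finset.univ.filter fun n : ZMod T => ZMod.dft h n ≠ 0).card ≤ 2 * st := by
    have hsub : (Finset.univ.filter fun n : ZMod T => ZMod.dft h n ≠ 0) ⊆
        (Finset.univ.filter fun n : ZMod T => ZMod.dft g n ≠ 0) ∪
        (Finset.univ.filter fun n : ZMod T => ZMod.dft (fun a => f (t, a)) n ≠ 0) := by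
      intro n hn
      simp only [Finset.mem_filter, Finset.mem_univ, true_and] at hn
      rw [hdfth] at hn
      simp only [Finset.mem_union, Finset.mem_filter, Finset.mem_univ, true_and]
      by_contra hcon
      push_neg at hcon
      simp [hcon.1, hcon.2] at hn
    have hcoleq : (Finset.univ.filter fun n : ZMod T => colGabor N T f t n ≠ 0) =
        (Finset.univ.filter fun n : ZMod T => ZMod.dft (fun a => f (t, a)) n ≠ 0) := by
      simp only [colGabor]
      exact dft1_support_eq T (fun a => f (t, a))
    have hg' : (Finset.univ.filter fun n : ZMod T => ZMod.dft g n ≠ 0).card ≤ st := by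
      rw [← dft1_support_eq]
      exact hgsupp
    have hf' : (Finset.univ.filter fun n : ZMod T =>
        ZMod.dft (fun a => f (t, a)) n ≠ 0).card ≤ st := le_of_eq (by rw [hst, hcoleq])
    calc (Finset.univ.filter fun n : ZMod T => ZMod.dft h n ≠ 0).card
        ≤ _ := Finset.card_le_card hsub
      _ ≤ _ + _ := Finset.card_union_le _ _
      _ ≤ st + st := Nat.add_le_add hg' hf'
      _ = 2 * st := (two_mul st).symm
  have hzero : h = 0 := by
    refine donoho_stark T h ?_
    calc ((Finset.univ.filter fun a : ZMod T => h a ≠ 0).card : ℝ) *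
          ((Finset.univ.filter fun n : ZMod T => ZMod.dft h n ≠ 0).card : ℝ)
        ≤ (mt : ℝ) * (2 * st : ℕ) := by
          refine mul_le_mul ?_ ?_ (by positivity) hmtnn
          · exact_mod_cast hsupph
          · exact_mod_cast hsuppF
      _ = 2 * ((mt : ℝ) * st) := by push_cast; ring
      _ < (T : ℝ) := by linarith
  have := congrFun hzero a
  simp only [hh, Pi.zero_apply, sub_eq_zero] at this
  exact this
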